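/- arXiv:1306.1366 — 3 statements merged into one kernel-verified Lean document; each statement's English description precedes it below -/
import Mathlib

section
/- Let L_m be a Lyndon word appearing as a factor of W, and let z be a nonempty proper suffix of L_m. Then z >_lex L_m; consequently, for any words x and any non-increasing sequence of Lyndon words L_m ≥_lex L_{s+1} ≥_lex ... ≥_lex L_k, the word x z L_{m+1} ... L_k is lexicographically greater than x L_{s+1} ... L_k whenever m ≤ s. (The key comparison step in the proof of the compatibility theorem.) -/
/-- A Lyndon word: nonempty and strictly lexicographically smaller than
every proper cyclic rotation. -/
def IsLyndon {α : Type*} [LinearOrder α] (l : List α) : Prop :=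
  l ≠ [] ∧ ∀ u v : List α, u ≠ [] → v ≠ [] → l = u ++ v → l < v ++ u

namespace LyndonAux

variable {α : Type*} [LinearOrder α]

/-- `s` and `t` share a common prefix after which `s` has a strictly smaller letter. -/
def SDiff (s t : List α) : Prop :=
  ∃ (p s' t' : List α) (a b : α), a < b ∧ s = p ++ a :: s' ∧ t = p ++ b :: t'

lemma lt_iff_lex {s t : List α} : s < t ↔ List.Lex (· < ·) s t := Iff.rfl

lemma SDiff.lt_append {s t : List α} (h : SDiff s t) (u v : List α) : s ++ u < t ++ v := by
  obtain ⟨p, s', t', a, b, hab, rfl, rfl⟩ := h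
  rw [lt_iff_lex]
  simp only [List.append_assoc, List.cons_append]
  exact List.Lex.append_left _ (List.Lex.rel hab) p

lemma SDiff.lt {s t : List α} (h : SDiff s t) : s < t := by
  simpa using h.lt_append [] []

lemma SDiff.cons {s t : List α} (c : α) (h : SDiff s t) : SDiff (c :: s) (c :: t) := by
  obtain ⟨p, s', t', a, b, hab, rfl, rfl⟩ := h
  exact ⟨c :: p, s', t', a, b, hab, rfl, rfl⟩

/-- A strict inequality is either a strict-prefix relation or a strict letter difference. -/
lemma lt_imp : ∀ {s t : List α}, s < t → s <+: t ∨ SDiff s t := by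
  intro s t h
  rw [lt_iff_lex] at h
  induction h with
  | nil => exact Or.inl (List.nil_prefix)
  | @cons a l₁ l₂ h ih =>
      rcases ih with ⟨u, hu⟩ | h'
      · exact Or.inl ⟨u, by simp [hu]⟩
      · exact Or.inr (h'.cons a)
  | @rel a₁ l₁ a₂ l₂ h =>
      exact Or.inr ⟨[], l₁, l₂, a₁, a₂, h, rfl, rfl⟩

lemma lt_of_append_left_lt : ∀ (p : List α) {a b : List α}, p ++ a < p ++ b → a < b := by
  intro p
  induction p with
  | nil => intro a b h; exact h
  | cons c p ih =>
      intro a b h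
      rw [lt_iff_lex] at h
      cases h with
      | cons h => exact ih (lt_iff_lex.mpr h)
      | rel h => exact absurd h (lt_irrefl c)

/-- Key lemma: a nonempty proper suffix of a Lyndon word strictly differs from it
(with the word smaller at the first difference). -/
lemma key {L y z : List α} (hL : IsLyndon L) (hy : y ≠ []) (hz : z ≠ [])
    (hsplit : L = y ++ z) : SDiff L z := by
  have hlen : z.length < L.length := by
    subst hsplit
    simp only [List.length_append]
    have : 0 < y.length := List.length_pos_iff.mpr hy
    omega
  have h1 : L < z ++ y := hL.2 y z hy hz hsplit
  rcases lt_trichotomy z L with h | h | h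
  · rcases lt_imp h with hpre | hsd
    · -- z is a prefix of L : L = z ++ t
      obtain ⟨t, ht⟩ := hpre
      have htne : t ≠ [] := by
        rintro rfl
        rw [List.append_nil] at ht
        rw [ht] at hlen
        omega
      have h2 : L < t ++ z := hL.2 z t hz htne ht.symm
      have hty : t < y := lt_of_append_left_lt z (by rw [ht]; exact h1)
      have hlen2 : t.length = y.length := by
        have := congrArg List.length ht
        rw [hsplit] at this
        simp only [List.length_append] at this
        omega
      rcases lt_imp hty with hp | hs
      · have : t = y := hp.eq_of_length hlen2
        exact absurd (this ▸ hty) (lt_irrefl y)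
      · have : t ++ z < y ++ z := hs.lt_append z z
        rw [hsplit] at h2
        exact absurd h2 (lt_asymm this)
    · -- SDiff z L : then z ++ y < L, contradicting L < z ++ y
      have : z ++ y < L := by simpa using hsd.lt_append y []
      exact absurd h1 (lt_asymm this)
  · rw [h] at hlen; omega
  · rcases lt_imp h with hpre | hsd
    · exact absurd hpre.length_le (by omega)
    · exact hsd

/-- If `t` is a prefix of `L` and `SDiff L z`, then `t` either strictly differs
from `z` or is a prefix of `z`. -/
lemma prefix_sdiff : ∀ (t L z : List α), SDiff L z → t <+: L → SDiff t z ∨ t <+: z := by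
  intro t
  induction t with
  | nil => intro L z _ _; exact Or.inr (List.nil_prefix)
  | cons c t ih =>
      intro L z hsd hpre
      obtain ⟨p, s', t', a, b, hab, hL, hz⟩ := hsd
      cases p with
      | nil =>
          simp only [List.nil_append] at hL hz
          obtain ⟨u, hu⟩ := hpre
          rw [hL] at hu
          have hc : c = a := by
            have := hu
            simp only [List.cons_append] at this
            exact (List.cons.inj this.symm).1.symm
          subst hc
          exact Or.inl ⟨[], t, t', c, b, hab, rfl, hz⟩
      | cons d p =>
          obtain ⟨u, hu⟩ := hpre
          rw [hL] at hu
          simp only [List.cons_append] at hu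
          have hc : c = d := (List.cons.inj hu.symm).1.symm
          subst hc
          have htu : t ++ u = p ++ a :: s' := (List.cons.inj hu.symm).2.symm
          have hsd' : SDiff (p ++ a :: s') (p ++ b :: t') := ⟨p, s', t', a, b, hab, rfl, rfl⟩
          have hpre' : t <+: p ++ a :: s' := ⟨u, htu⟩
          rcases ih _ _ hsd' hpre' with h | h
          · rw [hz]
            exact Or.inl (by simpa using h.cons c)
          · obtain ⟨u, hu⟩ := h
            rw [hz]
            exact Or.inr ⟨u, by simp [hu]⟩

/-- A concatenation of words each `≤ L` is smaller than `z ++ w` for any nonempty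
proper suffix `z` of the Lyndon word `L`. -/
lemma flatten_lt (L : List α) (hL : IsLyndon L) :
    ∀ (T : List (List α)), (∀ t ∈ T, t ≤ L) →
      ∀ z, z ≠ [] → (∃ y, y ≠ [] ∧ L = y ++ z) →
      ∀ w, T.flatten < z ++ w := by
  intro T
  induction T with
  | nil =>
      intro _ z hz _ w
      cases z with
      | nil => exact absurd rfl hz
      | cons a z => exact List.nil_lt_cons _ _
  | cons t T ih =>
      intro hT z hz hsuf w
      obtain ⟨y, hy, hsplit⟩ := hsuf
      have hKL : SDiff L z := key hL hy hz hsplit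
      have ht : t ≤ L := hT t List.mem_cons_self
      rcases eq_or_lt_of_le ht with rfl | htlt
      · rw [List.flatten_cons]
        exact hKL.lt_append _ _
      · rcases lt_imp htlt with hpre | hsd
        · rcases prefix_sdiff t L z hKL hpre with h | h
          · rw [List.flatten_cons]
            exact h.lt_append _ _
          · obtain ⟨z', hz'⟩ := h
            have hz'ne : z' ≠ [] := by
              rintro rfl
              simp only [List.append_nil] at hz'
              subst hz'
              obtain ⟨u, hu⟩ := hpre
              have : L ++ [] < t ++ u := hKL.lt_append [] u
              rw [List.append_nil, hu] at this
              exact absurd this (lt_irrefl L)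
            have hsuf' : ∃ y', y' ≠ [] ∧ L = y' ++ z' := by
              refine ⟨y ++ t, by simp [hy], ?_⟩
              rw [hsplit, ← hz']
              simp [List.append_assoc]
            have hrec : T.flatten < z' ++ w :=
              ih (fun s hs => hT s (List.mem_cons_of_mem t hs)) z' hz'ne hsuf' w
            rw [List.flatten_cons, ← hz', List.append_assoc]
            exact lt_iff_lex.mpr (List.Lex.append_left _ (lt_iff_lex.mp hrec) t)
        · rw [List.flatten_cons]
          have h1 : t ++ T.flatten < L := by simpa using hsd.lt_append T.flatten []
          have h2 : L < z ++ w := by simpa using hKL.lt_append [] w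
          exact lt_trans h1 h2

end LyndonAux

/-- Key comparison step: a nonempty proper suffix `z` of a Lyndon word `L`
satisfies `z > L`; consequently, for any word `x` and any non-increasing
sequence of Lyndon words headed by `L` (so that `S`, a suffix of `M`,
plays the role of `L_{s+1} ⋯ L_k` and `M` the role of `L_{m+1} ⋯ L_k`),
we have `x ++ S.flatten < x ++ z ++ M.flatten`. -/
theorem lyndon_suffix_comparison {α : Type*} [LinearOrder α]
    (L y z : List α) (hL : IsLyndon L)
    (hy : y ≠ []) (hz : z ≠ []) (hsplit : L = y ++ z) :
    L < z ∧
    ∀ (x : List α) (M S : List (List α)),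
      (∀ l ∈ M, IsLyndon l) → S <:+ M →
      (L :: M).Chain' (· ≥ ·) →
      x ++ S.flatten < x ++ z ++ M.flatten := by
  have hKL := LyndonAux.key hL hy hz hsplit
  refine ⟨hKL.lt, ?_⟩
  intro x M S _ hSM hchain
  have hpw : (L :: M).Pairwise (· ≥ ·) := List.isChain_iff_pairwise.mp hchain
  have hle : ∀ t ∈ M, t ≤ L := by
    intro t htM
    exact (List.pairwise_cons.mp hpw).1 t htM
  have hmain : S.flatten < z ++ M.flatten :=
    LyndonAux.flatten_lt L hL S (fun t ht => hle t (hSM.subset ht)) z hz ⟨y, hy, hsplit⟩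
      M.flatten
  rw [List.append_assoc]
  exact LyndonAux.lt_iff_lex.mpr
    (List.Lex.append_left _ (LyndonAux.lt_iff_lex.mp hmain) x)
end

section
/- In the Lyndon factorization W = L_1 L_2 ... L_k, the last factor L_k is the lexicographically smallest nonempty suffix of W. -/
section Aux
variable {α : Type*} [LinearOrder α]

/-- a list is ≤ itself with anything appended. -/
lemma aux_le_append (l m : List α) : l ≤ l ++ m := by
  rcases m with _ | ⟨x, m⟩
  · simp
  · apply le_of_lt
    show List.Lex (· < ·) l (l ++ x :: m)
    induction l with
    | nil => exact List.Lex.nil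
    | cons a l ih => exact List.Lex.cons ih

/-- left cancellation for lex. -/
lemma aux_append_lt_cancel {l a b : List α} (h : l ++ a < l ++ b) : a < b := by
  induction l with
  | nil => exact h
  | cons c l ih =>
    have h' : List.Lex (· < ·) (c :: (l ++ a)) (c :: (l ++ b)) := h
    rw [List.lex_cons_iff] at h'
    exact ih h'

/-- dichotomy: `a < b` means either `a` is a prefix of `b` or they differ strictly
at some position, in which case appending anything preserves the inequality. -/
lemma aux_lt_dichotomy {a b : List α} (h : a < b) :
    a <+: b ∨ ∀ c d : List α, a ++ c < b ++ d := by
  induction h with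
  | nil => left; exact ⟨_, rfl⟩
  | @cons a l₁ l₂ _ ih =>
    rcases ih with hpre | hall
    · left; obtain ⟨t, rfl⟩ := hpre; exact ⟨t, rfl⟩
    · right; intro c d; exact List.Lex.cons (hall c d)
  | rel hr => right; intro c d; exact List.Lex.rel hr

lemma aux_td {β : Type*} {l : List β} {i : ℕ} (h1 : 0 < i) (h2 : i < l.length) :
    l.take i ≠ [] ∧ l.drop i ≠ [] := by
  constructor
  · intro hnil
    have := congrArg List.length hnil
    simp only [List.length_take, List.length_nil] at this
    omega
  · intro hnil
    have := congrArg List.length hnil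
    simp only [List.length_drop, List.length_nil] at this
    omega
end Aux

/-- A Lyndon word is smaller than each of its proper nonempty suffixes. -/
lemma lyndon_lt_suffix {α : Type*} [LinearOrder α] {l u v : List α}
    (hl : IsLyndon l) (hu : u ≠ []) (hv : v ≠ []) (h : l = u ++ v) : l < v := by
  by_contra hcon
  push_neg at hcon
  rcases lt_or_eq_of_le hcon with hvl | hvl
  · rcases aux_lt_dichotomy hvl with hpre | hall
    · -- v is a prefix of l : l = v ++ w with w ≠ []
      obtain ⟨w, hw⟩ := hpre
      have hwne : w ≠ [] := by
        rintro rfl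
        rw [List.append_nil] at hw
        apply hu
        have e := congrArg List.length h
        rw [← hw] at e
        simp only [List.length_append] at e
        exact List.length_eq_zero_iff.mp (by omega)
      have h1 : l < v ++ u := hl.2 u v hu hv h
      have h2 : l < w ++ v := hl.2 v w hv hwne hw.symm
      have hwu : w < u := aux_append_lt_cancel (a := w) (b := u) (l := v)
        (by rw [hw]; exact h1)
      have hlen : w.length = u.length := by
        have e1 := congrArg List.length h
        have e2 := congrArg List.length hw
        simp only [List.length_append] at e1 e2
        omega
      rcases aux_lt_dichotomy hwu with hpre' | hall'
      · have : w = u := List.IsPrefix.eq_of_length hpre' hlen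
        subst this
        rw [← h] at h2
        exact lt_irrefl _ h2
      · have h3 : w ++ v < u ++ v := hall' v v
        rw [← h] at h3
        exact lt_asymm h2 h3
    · have h4 : v ++ u < l ++ [] := hall u []
      rw [List.append_nil] at h4
      exact lt_asymm (hl.2 u v hu hv h) h4
  · have := congrArg List.length h
    rw [hvl] at this
    simp only [List.length_append] at this
    have : u.length = 0 := by omega
    exact hu (List.length_eq_zero_iff.mp this)

lemma aux_main {α : Type*} [LinearOrder α] :
    ∀ (F : List (List α)) (hF : F ≠ []), (∀ l ∈ F, IsLyndon l) → F.Chain' (· ≥ ·) →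
      ∀ i, i < F.flatten.length → F.getLast hF ≤ F.flatten.drop i := by
  intro F
  induction F with
  | nil => intro hF; exact absurd rfl hF
  | cons L F' ih =>
    intro hF hLy hchain i hi
    have hLyL := hLy L (by simp)
    rcases eq_or_ne F' [] with rfl | hF'
    · simp only [List.flatten_cons, List.flatten_nil, List.append_nil] at hi ⊢
      rw [show (L :: []).getLast hF = L from rfl]
      rcases Nat.eq_zero_or_pos i with rfl | hipos
      · simp
      · exact le_of_lt (lyndon_lt_suffix hLyL (u := L.take i) (v := L.drop i)
          (aux_td hipos hi).1 (aux_td hipos hi).2 (List.take_append_drop i L).symm)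
    · have hlast : (L :: F').getLast hF = F'.getLast hF' := List.getLast_cons hF'
      replace hchain := List.isChain_iff_pairwise.mp hchain
      rw [List.pairwise_cons] at hchain
      have hlastL : F'.getLast hF' ≤ L := hchain.1 _ (List.getLast_mem hF')
      simp only [List.flatten_cons] at hi ⊢
      rw [hlast]
      have ihs := ih hF' (fun l hl => hLy l (List.mem_cons_of_mem _ hl))
        (List.isChain_iff_pairwise.mpr hchain.2)
      rcases lt_or_ge i L.length with hiL | hiL
      · rw [List.drop_append_of_le_length (le_of_lt hiL)]
        rcases Nat.eq_zero_or_pos i with rfl | hipos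
        · simp only [List.drop_zero]
          exact le_trans hlastL (aux_le_append L _)
        · have hLd : L < L.drop i :=
            lyndon_lt_suffix hLyL (u := L.take i) (v := L.drop i)
              (aux_td hipos hiL).1 (aux_td hipos hiL).2 (List.take_append_drop i L).symm
          refine le_of_lt ?_
          calc F'.getLast hF' ≤ L := hlastL
            _ < L.drop i := hLd
            _ ≤ L.drop i ++ F'.flatten := aux_le_append _ _
      · have : i = L.length + (i - L.length) := by omega
        rw [this, List.drop_length_add_append]
        apply ihs
        simp only [List.length_append] at hi
        omega

/-- In the Lyndon factorization `W = L_1 ⋯ L_k`, the last factor `L_k` is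
the lexicographically smallest nonempty suffix of `W`. -/
theorem last_lyndon_factor_min_suffix {α : Type*} [LinearOrder α]
    (F : List (List α)) (hF : F ≠ [])
    (hLy : ∀ l ∈ F, IsLyndon l) (hchain : F.Chain' (· ≥ ·)) :
    F.getLast hF <:+ F.flatten ∧
      ∀ i, i < F.flatten.length → F.getLast hF ≤ F.flatten.drop i := by
  refine ⟨?_, aux_main F hF hLy hchain⟩
  conv_rhs => rw [← List.dropLast_append_getLast hF]
  rw [List.flatten_append]
  simp
end

section
/- Let W = L_1...L_k be the Lyndon factorization of W and let W' = W L', where L' is a Lyndon word with L_k ≥_lex L'. Then the Lyndon factorization of W' is L_1, ..., L_k, L'; moreover, for any two positions i < j within W, the global suffix order of i and j in W' agrees with their order given by the compatibility theorem applied to the block L_1...L_k (i.e., appending a new smaller-or-equal Lyndon factor does not change the mutual order of suffixes restricted to earlier blocks). -/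
section Helpers
variable {α : Type*} [LinearOrder α]

lemma cons_lt_cons_iff' (a b : α) (s t : List α) :
    (a::s : List α) < b::t ↔ a < b ∨ (a = b ∧ s < t) := by
  constructor
  · intro h
    cases h with
    | rel h => exact Or.inl h
    | cons h => exact Or.inr ⟨rfl, h⟩
  · rintro (h | ⟨rfl, h⟩)
    · exact List.Lex.rel h
    · exact List.Lex.cons h

lemma append_lt_append_left_iff (c a b : List α) : c ++ a < c ++ b ↔ a < b := by
  induction c with
  | nil => rfl
  | cons x c ih => simpa [cons_lt_cons_iff'] using ih

lemma lt_append_of_ne_nil (a b : List α) (hb : b ≠ []) : a < a ++ b := by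
  induction a with
  | nil =>
    cases b with
    | nil => exact absurd rfl hb
    | cons x xs => exact List.Lex.nil
  | cons x a ih => exact List.Lex.cons ih

lemma le_append (a b : List α) : a ≤ a ++ b := by
  cases b with
  | nil => simp
  | cons x xs => exact le_of_lt (lt_append_of_ne_nil _ _ (by simp))

lemma lt_of_append_lt_append {a b : List α} (c d : List α) (h : a ++ c < b ++ d)
    (hlen : a.length = b.length) (hcd : ¬ c < d) : a < b := by
  induction a generalizing b with
  | nil =>
    cases b with
    | nil => exact absurd h hcd
    | cons y b => simp at hlen
  | cons x a ih =>
    cases b with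
    | nil => simp at hlen
    | cons y b =>
      rw [List.cons_append, List.cons_append, cons_lt_cons_iff'] at h
      rcases h with h | ⟨rfl, h⟩
      · exact List.Lex.rel h
      · exact List.Lex.cons (ih h (by simpa using hlen))

lemma not_prefix_lt_iff {u v : List α} (hu : ¬ u <+: v) (hv : ¬ v <+: u)
    (x y : List α) : u < v ↔ u ++ x < v ++ y := by
  induction u generalizing v with
  | nil => exact absurd (List.nil_prefix) hu
  | cons a u ih =>
    cases v with
    | nil => exact absurd (List.nil_prefix) hv
    | cons b v =>
      rw [List.cons_prefix_cons] at hu hv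
      rcases lt_trichotomy a b with h | rfl | h
      · constructor <;> intro _ <;> exact List.Lex.rel h
      · push_neg at hu hv
        rw [List.cons_append, List.cons_append, cons_lt_cons_iff', cons_lt_cons_iff']
        simp only [lt_irrefl, false_or, true_and]
        exact ih (hu rfl) (hv rfl)
      · constructor <;> intro hlt <;> exfalso <;>
        · rcases (cons_lt_cons_iff' _ _ _ _).1 hlt with h' | ⟨rfl, _⟩
          · exact absurd h' (lt_asymm h)
          · exact lt_irrefl _ h

/-- A Lyndon word is ≤ all of its proper suffixes. -/
lemma IsLyndon.le_suffix {l u v : List α} (hL : IsLyndon l) (hl : l = u ++ v)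
    (hu : u ≠ []) (hv : v ≠ []) : l ≤ v := by
  by_contra hlt
  push_neg at hlt
  have hrot : l < v ++ u := hL.2 u v hu hv hl
  by_cases hp : v <+: l
  · obtain ⟨w, hw⟩ := hp
    have hulen : 0 < u.length := List.length_pos_iff.2 hu
    have hwlen : w.length = u.length := by
      have := congrArg List.length hw
      have h2 := congrArg List.length hl
      simp [List.length_append] at this h2
      omega
    have hwne : w ≠ [] := by
      intro h; rw [h] at hwlen; simp at hwlen; omega
    have hrot2 : l < w ++ v := hL.2 v w hv hwne hw.symm
    have h1 : w < u := by
      rw [hl] at hw hrot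
      exact (append_lt_append_left_iff v w u).1 (by rw [hw]; exact hrot)
    have h2 : u < w := by
      rw [hl] at hrot2
      exact lt_of_append_lt_append v v hrot2 hwlen.symm (lt_irrefl v)
    exact absurd h2 (lt_asymm h1)
  · have hp2 : ¬ l <+: v := by
      intro h
      have := h.length_le
      have h2 := congrArg List.length hl
      simp [List.length_append] at h2
      have := List.length_pos_iff.2 hu
      omega
    have := (not_prefix_lt_iff hp hp2 u []).1 hlt
    simp only [List.append_nil] at this
    exact absurd this (lt_asymm hrot)

lemma IsLyndon.le_drop {l : List α} (hL : IsLyndon l) {t : ℕ} (ht : t < l.length) :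
    l ≤ l.drop t := by
  rcases Nat.eq_zero_or_pos t with rfl | htpos
  · simp
  · refine hL.le_suffix (List.take_append_drop t l).symm ?_ ?_
    · simp only [ne_eq, List.take_eq_nil_iff, not_or]
      exact ⟨by omega, hL.1⟩
    · intro h
      have := congrArg List.length h
      simp at this
      omega

/-- The last Lyndon factor is ≤ every nonempty suffix of the flattened word. -/
lemma last_le_suffix : ∀ (F : List (List α)) (hF : F ≠ []),
    (∀ l ∈ F, IsLyndon l) → F.Chain' (· ≥ ·) →
    ∀ t, t < F.flatten.length → F.getLast hF ≤ F.flatten.drop t := by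
  intro F
  induction F with
  | nil => intro hF; exact absurd rfl hF
  | cons L F ih =>
    intro _ hLy hchain t ht
    have hLLy : IsLyndon L := hLy L (by simp)
    cases F with
    | nil =>
      simp only [List.flatten, List.append_nil, List.getLast_singleton] at *
      simpa using hLLy.le_drop (by simpa using ht)
    | cons L₂ F' =>
      have hne : L₂ :: F' ≠ [] := by simp
      rw [List.flatten_cons] at ht ⊢
      rw [List.getLast_cons hne]
      by_cases hcase : t < L.length
      · rw [List.drop_append_of_le_length (le_of_lt hcase)]
        have h1 : (L₂ :: F').getLast hne ≤ L := by
          unfold List.Chain' at hchain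
          rw [List.isChain_iff_pairwise] at hchain
          exact (List.pairwise_cons.1 hchain).1 _ (List.getLast_mem hne)
        calc (L₂ :: F').getLast hne ≤ L := h1
          _ ≤ L.drop t := hLLy.le_drop hcase
          _ ≤ L.drop t ++ (L₂ :: F').flatten := le_append _ _
      · push_neg at hcase
        rw [List.drop_append, List.drop_eq_nil_of_le hcase, List.nil_append]
        refine ih hne (fun l hl => hLy l (by simp [hl])) hchain.tail _ ?_
        simp only [List.length_append] at ht
        omega

end Helpers

/-- Appending a Lyndon word `L'` with `L_k ≥ L'` to `W = L_1 ⋯ L_k`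
extends the Lyndon factorization to `L_1, …, L_k, L'`, and does not change
the mutual order of the global suffixes starting inside `W`. -/
theorem append_lyndon_factor {α : Type*} [LinearOrder α]
    (F : List (List α)) (hF : F ≠ [])
    (hLy : ∀ l ∈ F, IsLyndon l) (hchain : F.Chain' (· ≥ ·))
    (L' : List α) (hL' : IsLyndon L') (hle : L' ≤ F.getLast hF) :
    ((∀ l ∈ F ++ [L'], IsLyndon l) ∧ (F ++ [L']).Chain' (· ≥ ·) ∧
        (F ++ [L']).flatten = F.flatten ++ L') ∧
      ∀ i j, i < j → j < F.flatten.length →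
        (F.flatten.drop i < F.flatten.drop j ↔
          (F.flatten ++ L').drop i < (F.flatten ++ L').drop j) := by
  constructor
  · refine ⟨?_, ?_, by simp⟩
    · intro l hl
      rcases List.mem_append.1 hl with h | h
      · exact hLy l h
      · simp at h; subst h; exact hL'
    · unfold List.Chain'
      rw [List.isChain_append]
      refine ⟨hchain, List.isChain_singleton _, ?_⟩
      intro x hx y hy
      simp only [List.head?_cons, Option.mem_def, Option.some.injEq] at hy
      rw [List.getLast?_eq_getLast hF] at hx
      simp only [Option.mem_def, Option.some.injEq] at hx
      subst hx; subst hy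
      exact hle
  · intro i j hij hj
    set W := F.flatten with hW
    have hL'le : ∀ t, t < W.length → L' ≤ W.drop t := fun t ht =>
      le_trans hle (last_le_suffix F hF hLy hchain t ht)
    have hi : i ≤ W.length := le_of_lt (lt_trans hij hj)
    rw [List.drop_append_of_le_length hi, List.drop_append_of_le_length (le_of_lt hj)]
    set u := W.drop i with hu
    set v := W.drop j with hv
    have hulen : u.length = W.length - i := List.length_drop
    have hvlen : v.length = W.length - j := List.length_drop
    have hvu : v.length < u.length := by omega
    by_cases hp : v <+: u
    · obtain ⟨w, hw⟩ := hp
      have hwne : w ≠ [] := by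
        intro h
        rw [h, List.append_nil] at hw
        rw [hw] at hvu
        exact lt_irrefl _ hvu
      have hwdrop : w = W.drop (v.length + i) := by
        have : u.drop v.length = w := by rw [← hw]; simp
        rw [← this, hu, List.drop_drop, Nat.add_comm]
      have hwpos : v.length + i < W.length := by omega
      have hwge : L' ≤ w := hwdrop ▸ hL'le _ hwpos
      have hkey : L' < w ++ L' := by
        rcases eq_or_lt_of_le hwge with rfl | hlt
        · exact lt_append_of_ne_nil _ _ hL'.1
        · by_cases hp2 : L' <+: w
          · obtain ⟨r, hr⟩ := hp2
            have hrne : r ≠ [] := by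
              intro h; rw [h, List.append_nil] at hr; rw [hr] at hlt
              exact lt_irrefl _ hlt
            rw [← hr, List.append_assoc]
            exact lt_append_of_ne_nil _ _ (by simp [hrne])
          · have hp3 : ¬ w <+: L' := by
              intro h
              obtain ⟨s, hs⟩ := h
              rw [← hs] at hlt
              exact absurd hlt (not_lt.2 (le_append w s))
            have := (not_prefix_lt_iff hp2 hp3 [] L').1 hlt
            simpa using this
      have hvltu : v < u := by rw [← hw]; exact lt_append_of_ne_nil v w hwne
      have hvltu' : v ++ L' < u ++ L' := by
        rw [← hw, List.append_assoc]
        exact (append_lt_append_left_iff v L' (w ++ L')).2 hkey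
      exact iff_of_false (lt_asymm hvltu) (lt_asymm hvltu')
    · have hp2 : ¬ u <+: v := by
        intro h
        exact absurd h.length_le (by omega)
      exact not_prefix_lt_iff hp2 hp L' L'
end
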